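/- Let E be a Banach lattice and let (P_i)_{i∈I} be a family of order projections on E (linear maps P_i: E → E with P_i ∘ P_i = P_i and 0 ≤ P_i x ≤ x for all x ∈ E⁺). Then the following are equivalent: (1) E equals the norm closure of ⋃_i P_i(E); (2) for every x ∈ E and every ε > 0 there exists an index i with ‖x − P_i x‖ < ε. Moreover, when these equivalent conditions hold, E has order continuous norm if and only if every range P_i(E) (a closed sublattice of E, hence a Banach lattice) has order continuous norm. -/

import Mathlib

open Set Filter

/-- Let `(P i)` be a family of order projections on a Banach lattice `E`.
Then the union of the ranges is norm dense iff for every `x` and `ε > 0` there is an `i`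
with `‖x - P i x‖ < ε`; and in that case `E` has order continuous norm iff every range
`P i (E)` has order continuous norm. -/
theorem bandProjections_density_and_orderContinuity
    {E : Type*} [NormedAddCommGroup E] [Lattice E] [HasSolidNorm E]
      [IsOrderedAddMonoid E] [NormedSpace ℝ E] [CompleteSpace E]
    {ι : Type*} (P : ι → E →ₗ[ℝ] E)
    (hidem : ∀ i, (P i) ∘ₗ (P i) = P i)
    (hord : ∀ i, ∀ x : E, 0 ≤ x → 0 ≤ P i x ∧ P i x ≤ x) :
    ((closure (⋃ i, Set.range (P i)) = univ) ↔
      ∀ x : E, ∀ ε : ℝ, 0 < ε → ∃ i, ‖x - P i x‖ < ε) ∧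
    (closure (⋃ i, Set.range (P i)) = univ →
      ((∀ (x : ℕ → E) (b : E), Monotone x → (∀ n, x n ≤ b) →
          ∃ l : E, Tendsto x atTop (nhds l)) ↔
        ∀ i, ∀ (x : ℕ → E) (b : E), (∀ n, x n ∈ LinearMap.range (P i)) →
          b ∈ LinearMap.range (P i) → Monotone x → (∀ n, x n ≤ b) →
          ∃ l : E, Tendsto x atTop (nhds l))) := by
  -- basic facts about order projections
  have hfix : ∀ i (x : E), P i (P i x) = P i x := fun i x => LinearMap.congr_fun (hidem i) x
  have hmono : ∀ i, Monotone (P i) := by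
    intro i u v huv
    have h := (hord i (v - u) (sub_nonneg.2 huv)).1
    rw [map_sub, sub_nonneg] at h
    exact h
  have habs : ∀ i (x : E), |P i x| ≤ |x| := by
    intro i x
    have h1 := hord i (x⁺) (posPart_nonneg x)
    have h2 := hord i (x⁻) (negPart_nonneg x)
    calc |P i x| = |P i (x⁺) - P i (x⁻)| := by rw [← map_sub, posPart_sub_negPart]
      _ ≤ |P i (x⁺)| + |P i (x⁻)| := by
            have := abs_add_le (P i (x⁺)) (-(P i (x⁻)))
            rwa [abs_neg, ← sub_eq_add_neg] at this
      _ = P i (x⁺) + P i (x⁻) := by rw [abs_of_nonneg h1.1, abs_of_nonneg h2.1]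
      _ ≤ x⁺ + x⁻ := add_le_add h1.2 h2.2
      _ = |x| := posPart_add_negPart x
  have hnorm : ∀ i (x : E), ‖P i x‖ ≤ ‖x‖ := fun i x => HasSolidNorm.solid (habs i x)
  -- the density equivalence
  have hdense : (closure (⋃ i, Set.range (P i)) = univ) →
      ∀ x : E, ∀ ε : ℝ, 0 < ε → ∃ i, ‖x - P i x‖ < ε := by
    intro hcl x ε hε
    have hx : x ∈ closure (⋃ i, Set.range (P i)) := hcl ▸ mem_univ x
    rw [Metric.mem_closure_iff] at hx
    obtain ⟨y, hy, hdy⟩ := hx (ε / 2) (by positivity)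
    obtain ⟨i, z, rfl⟩ := by simpa using hy
    refine ⟨i, ?_⟩
    have h1 : ‖x - P i x‖ ≤ ‖x - P i z‖ + ‖P i z - P i x‖ := by
      simpa using norm_add_le (x - P i z) (P i z - P i x)
    have h2 : ‖P i z - P i x‖ ≤ ‖P i z - x‖ := by
      have : P i z - P i x = P i (P i z - x) := by rw [map_sub, hfix]
      rw [this]
      exact hnorm i _
    have h3 : ‖x - P i z‖ < ε / 2 := by rwa [dist_eq_norm] at hdy
    have h4 : ‖P i z - x‖ = ‖x - P i z‖ := norm_sub_rev _ _
    linarith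
  refine ⟨⟨hdense, ?_⟩, ?_⟩
  · intro h
    apply eq_univ_of_forall
    intro x
    rw [Metric.mem_closure_iff]
    intro ε hε
    obtain ⟨i, hi⟩ := h x ε hε
    exact ⟨P i x, mem_iUnion.2 ⟨i, mem_range_self x⟩, by rwa [dist_eq_norm]⟩
  · intro hcl
    constructor
    · intro h i x b _ _ hm hb
      exact h x b hm hb
    · intro h x b hm hb
      suffices hC : CauchySeq x from cauchySeq_tendsto_of_complete hC
      set c : E := b - x 0 with hc
      set y : ℕ → E := fun n => x n - x 0 with hy
      have hy0 : ∀ n, 0 ≤ y n := fun n => sub_nonneg.2 (hm (Nat.zero_le n))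
      have hyc : ∀ n, y n ≤ c := fun n => sub_le_sub_right (hb n) _
      have hymono : Monotone y := fun m n hmn => sub_le_sub_right (hm hmn) _
      have hc0 : 0 ≤ c := le_trans (hy0 0) (hyc 0)
      rw [Metric.cauchySeq_iff]
      intro ε hε
      obtain ⟨i, hi⟩ := hdense hcl c (ε / 3) (by positivity)
      obtain ⟨l, hl⟩ := h i (fun n => P i (y n)) (P i c) (fun n => ⟨y n, rfl⟩) ⟨c, rfl⟩
        (fun m n hmn => hmono i (hymono hmn)) (fun n => hmono i (hyc n))
      have hcauchy := hl.cauchySeq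
      rw [Metric.cauchySeq_iff] at hcauchy
      obtain ⟨N, hN⟩ := hcauchy (ε / 3) (by positivity)
      refine ⟨N, fun m hmN n hnN => ?_⟩
      have hest : ∀ k, ‖y k - P i (y k)‖ ≤ ‖c - P i c‖ := by
        intro k
        have h1 : 0 ≤ y k - P i (y k) := sub_nonneg.2 (hord i (y k) (hy0 k)).2
        have h2 : y k - P i (y k) ≤ c - P i c := by
          have h3 := (hord i (c - y k) (sub_nonneg.2 (hyc k))).2
          rw [map_sub] at h3
          rw [sub_le_sub_iff] at h3 ⊢
          rwa [add_comm (P i c)] at h3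
        have h4 : 0 ≤ c - P i c := sub_nonneg.2 (hord i c hc0).2
        apply HasSolidNorm.solid
        rw [abs_of_nonneg h1, abs_of_nonneg h4]
        exact h2
      have hseq := hN m hmN n hnN
      rw [dist_eq_norm] at hseq ⊢
      have htr : ‖x m - x n‖ ≤ ‖y m - P i (y m)‖ + ‖P i (y m) - P i (y n)‖
          + ‖P i (y n) - y n‖ := by
        have : x m - x n = (y m - P i (y m)) + (P i (y m) - P i (y n)) + (P i (y n) - y n) := by
          simp only [hy]; abel
        rw [this]
        exact (norm_add_le _ _).trans (add_le_add_left (norm_add_le _ _) _)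
      have h5 : ‖P i (y n) - y n‖ = ‖y n - P i (y n)‖ := norm_sub_rev _ _
      have h6 := hest m
      have h7 := hest n
      linarith
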